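/- The map sending a norm −4 vector r of E6(2) to (r/2) mod E6(2) in the 2-part of the discriminant group induces a bijection between the set of ±-pairs {r, −r} of norm −4 vectors in E6(2) (36 pairs from 72 vectors) and the set of 36 non-isotropic vectors of the F_2-quadratic form (q_{E6(2)})_2 ≅ u ⊕ u ⊕ v. -/

import Mathlib

noncomputable section
open Matrix

/-- The Gram matrix of the negative definite root lattice `E6`
(negative of the Cartan matrix); `E6(2)` has Gram matrix `2 • E6gram`. -/
def E6gram : Matrix (Fin 6) (Fin 6) ℤ :=
  !![-2,1,0,0,0,0;
    1,-2,1,0,0,0;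
    0,1,-2,1,0,1;
    0,0,1,-2,1,0;
    0,0,0,1,-2,0;
    0,0,1,0,0,-2]

/-- The `E6`-norm of an integral vector; its norm in `E6(2)` is `2 * qE6 v`. -/
def qE6 (v : Fin 6 → ℤ) : ℤ := dotProduct v (E6gram.mulVec v)

/-- Reduction mod 2, realizing `(r/2 mod E6(2)) ∈ (q_{E6(2)})₂`: the 2-torsion
part of the discriminant group of `E6(2)` is `(1/2)E6(2)/E6(2) ≅ (ℤ/2)⁶`, and
`r ↦ r/2 mod E6(2)` corresponds to reduction of coordinates mod 2. -/
def reduce (r : Fin 6 → ℤ) : Fin 6 → ZMod 2 := fun i => (r i : ZMod 2)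

/-- The quadratic form `(q_{E6(2)})₂ ≅ u ⊕ u ⊕ v` on `(ℤ/2)⁶` induced by
`q(r/2 mod E6(2)) = (r/2)² mod 2ℤ`; explicitly `∑ xᵢ² + ∑_{edges of E6} xᵢxⱼ`. -/
def qF : (Fin 6 → ZMod 2) → ZMod 2 := fun x =>
  (x 0 ^ 2 + x 1 ^ 2 + x 2 ^ 2 + x 3 ^ 2 + x 4 ^ 2 + x 5 ^ 2) +
    (x 0 * x 1 + x 1 * x 2 + x 2 * x 3 + x 3 * x 4 + x 2 * x 5)


abbrev T6 := ℤ × ℤ × ℤ × ℤ × ℤ × ℤ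

def Qp (a b c d e f : ℤ) : ℤ :=
  -2*a^2 - 2*b^2 - 2*c^2 - 2*d^2 - 2*e^2 - 2*f^2
    + 2*a*b + 2*b*c + 2*c*d + 2*d*e + 2*c*f

def vec (t : T6) : Fin 6 → ℤ :=
  ![t.1, t.2.1, t.2.2.1, t.2.2.2.1, t.2.2.2.2.1, t.2.2.2.2.2]

def negT (t : T6) : T6 := (-t.1, -t.2.1, -t.2.2.1, -t.2.2.2.1, -t.2.2.2.2.1, -t.2.2.2.2.2)

def Tlist : List T6 := [
  (-1,-2,-3,-2,-1,-2),
  (-1,-2,-3,-2,-1,-1),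
  (-1,-2,-2,-2,-1,-1),
  (-1,-2,-2,-1,-1,-1),
  (-1,-2,-2,-1,0,-1),
  (-1,-1,-2,-2,-1,-1),
  (-1,-1,-2,-1,-1,-1),
  (-1,-1,-2,-1,0,-1),
  (-1,-1,-1,-1,-1,-1),
  (-1,-1,-1,-1,-1,0),
  (-1,-1,-1,-1,0,-1),
  (-1,-1,-1,-1,0,0),
  (-1,-1,-1,0,0,-1),
  (-1,-1,-1,0,0,0),
  (-1,-1,0,0,0,0),
  (-1,0,0,0,0,0),
  (0,-1,-2,-2,-1,-1),
  (0,-1,-2,-1,-1,-1),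
  (0,-1,-2,-1,0,-1),
  (0,-1,-1,-1,-1,-1),
  (0,-1,-1,-1,-1,0),
  (0,-1,-1,-1,0,-1),
  (0,-1,-1,-1,0,0),
  (0,-1,-1,0,0,-1),
  (0,-1,-1,0,0,0),
  (0,-1,0,0,0,0),
  (0,0,-1,-1,-1,-1),
  (0,0,-1,-1,-1,0),
  (0,0,-1,-1,0,-1),
  (0,0,-1,-1,0,0),
  (0,0,-1,0,0,-1),
  (0,0,-1,0,0,0),
  (0,0,0,-1,-1,0),
  (0,0,0,-1,0,0),
  (0,0,0,0,-1,0),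
  (0,0,0,0,0,-1),
  (0,0,0,0,0,1),
  (0,0,0,0,1,0),
  (0,0,0,1,0,0),
  (0,0,0,1,1,0),
  (0,0,1,0,0,0),
  (0,0,1,0,0,1),
  (0,0,1,1,0,0),
  (0,0,1,1,0,1),
  (0,0,1,1,1,0),
  (0,0,1,1,1,1),
  (0,1,0,0,0,0),
  (0,1,1,0,0,0),
  (0,1,1,0,0,1),
  (0,1,1,1,0,0),
  (0,1,1,1,0,1),
  (0,1,1,1,1,0),
  (0,1,1,1,1,1),
  (0,1,2,1,0,1),
  (0,1,2,1,1,1),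
  (0,1,2,2,1,1),
  (1,0,0,0,0,0),
  (1,1,0,0,0,0),
  (1,1,1,0,0,0),
  (1,1,1,0,0,1),
  (1,1,1,1,0,0),
  (1,1,1,1,0,1),
  (1,1,1,1,1,0),
  (1,1,1,1,1,1),
  (1,1,2,1,0,1),
  (1,1,2,1,1,1),
  (1,1,2,2,1,1),
  (1,2,2,1,0,1),
  (1,2,2,1,1,1),
  (1,2,2,2,1,1),
  (1,2,3,2,1,1),
  (1,2,3,2,1,2)
]

lemma qE6_eq (v : Fin 6 → ℤ) :
    qE6 v = Qp (v 0) (v 1) (v 2) (v 3) (v 4) (v 5) := by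
  simp [qE6, E6gram, dotProduct, Matrix.mulVec, Fin.sum_univ_succ, Qp,
    show ((2 : Fin 5).succ : Fin 6) = 3 by rfl,
    show ((3 : Fin 5).succ : Fin 6) = 4 by rfl,
    show ((4 : Fin 5).succ : Fin 6) = 5 by rfl,
    show ((2 : Fin 4).succ.succ : Fin 6) = 4 by rfl,
    show ((3 : Fin 4).succ.succ : Fin 6) = 5 by rfl,
    show ((2 : Fin 3).succ.succ.succ : Fin 6) = 5 by rfl]
  ring

def I1 : List ℤ := [-1, 0, 1]
def I2 : List ℤ := [-2, -1, 0, 1, 2]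
def I3 : List ℤ := [-3, -2, -1, 0, 1, 2, 3]

set_option maxHeartbeats 8000000 in
lemma key : ∀ a ∈ I1, ∀ b ∈ I2, ∀ c ∈ I3, ∀ d ∈ I2, ∀ e ∈ I1, ∀ f ∈ I2,
    Qp a b c d e f = -2 → (a, b, c, d, e, f) ∈ Tlist := by decide

lemma fwd : ∀ t ∈ Tlist, Qp t.1 t.2.1 t.2.2.1 t.2.2.2.1 t.2.2.2.2.1 t.2.2.2.2.2 = -2 := by
  decide

lemma eta6 (r : Fin 6 → ℤ) : r = vec (r 0, r 1, r 2, r 3, r 4, r 5) := by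
  funext i; fin_cases i <;> rfl

set_option maxHeartbeats 1000000 in
lemma root_mem (r : Fin 6 → ℤ) (h : qE6 r = -2) :
    (r 0, r 1, r 2, r 3, r 4, r 5) ∈ Tlist := by
  rw [qE6_eq] at h
  set a := r 0; set b := r 1; set c := r 2; set d := r 3; set e := r 4; set f := r 5
  have hQ : -2*a^2 - 2*b^2 - 2*c^2 - 2*d^2 - 2*e^2 - 2*f^2
      + 2*a*b + 2*b*c + 2*c*d + 2*d*e + 2*c*f = -2 := by
    rw [Qp] at h; linarith
  have ha : -1 ≤ a ∧ a ≤ 1 := by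
    constructor <;>
      linarith [sq_nonneg (2*b - c - a), sq_nonneg (3*c - 2*d - 2*f - a),
        sq_nonneg (4*d - 3*e - 2*f - a), sq_nonneg (5*e - 2*f - a), sq_nonneg (4*f - 3*a),
        sq_nonneg (a - 1), sq_nonneg (a + 1)]
  have hb : -2 ≤ b ∧ b ≤ 2 := by
    constructor <;>
      linarith [sq_nonneg (2*a - b), sq_nonneg (2*c - d - f - b),
        sq_nonneg (3*d - 2*e - f - b), sq_nonneg (4*e - f - b), sq_nonneg (5*f - 3*b),
        sq_nonneg (b - 2), sq_nonneg (b + 2)]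
  have hc : -3 ≤ c ∧ c ≤ 3 := by
    constructor <;>
      linarith [sq_nonneg (2*a - b), sq_nonneg (3*b - 2*c),
        sq_nonneg (2*d - e - c), sq_nonneg (3*e - c), sq_nonneg (2*f - c),
        sq_nonneg (c - 3), sq_nonneg (c + 3)]
  have hd : -2 ≤ d ∧ d ≤ 2 := by
    constructor <;>
      linarith [sq_nonneg (2*a - b), sq_nonneg (3*b - 2*c),
        sq_nonneg (4*c - 3*f - 3*d), sq_nonneg (2*e - d), sq_nonneg (5*f - 3*d),
        sq_nonneg (d - 2), sq_nonneg (d + 2)]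
  have he : -1 ≤ e ∧ e ≤ 1 := by
    constructor <;>
      linarith [sq_nonneg (2*a - b), sq_nonneg (3*b - 2*c),
        sq_nonneg (4*c - 3*d - 3*f), sq_nonneg (5*d - 3*f - 4*e), sq_nonneg (4*f - 3*e),
        sq_nonneg (e - 1), sq_nonneg (e + 1)]
  have hf : -2 ≤ f ∧ f ≤ 2 := by
    constructor <;>
      linarith [sq_nonneg (2*a - b), sq_nonneg (3*b - 2*c),
        sq_nonneg (4*c - 3*d - 3*f), sq_nonneg (5*d - 4*e - 3*f), sq_nonneg (2*e - f),
        sq_nonneg (f - 2), sq_nonneg (f + 2)]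
  have ma : a ∈ I1 := by simp [I1]; omega
  have mb : b ∈ I2 := by simp [I2]; omega
  have mc : c ∈ I3 := by simp [I3]; omega
  have md : d ∈ I2 := by simp [I2]; omega
  have me : e ∈ I1 := by simp [I1]; omega
  have mf : f ∈ I2 := by simp [I2]; omega
  exact key a ma b mb c mc d md e me f mf h

def TF : Finset (Fin 6 → ℤ) := (Tlist.map _root_.vec).toFinset

lemma root_iff (r : Fin 6 → ℤ) :
    2 * qE6 r = -4 ↔ ∃ t ∈ Tlist, vec t = r := by
  constructor
  · intro h
    exact ⟨(r 0, r 1, r 2, r 3, r 4, r 5), root_mem r (by omega), (eta6 r).symm⟩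
  · rintro ⟨t, ht, rfl⟩
    have h := fwd t ht
    rw [qE6_eq]
    show 2 * Qp t.1 t.2.1 t.2.2.1 t.2.2.2.1 t.2.2.2.2.1 t.2.2.2.2.2 = -4
    omega

lemma setEq : {r : Fin 6 → ℤ | 2 * qE6 r = -4} = ↑TF := by
  ext r
  rw [Set.mem_setOf_eq, root_iff]
  simp [TF]

lemma TFcard : TF.card = 72 := by decide

lemma card36 : (Finset.filter (fun x => qF x = 1) Finset.univ).card = 36 := by decide

lemma part1 : ∀ r : Fin 6 → ℤ, ∃ m : ℤ, qE6 r = 2 * m ∧ (m : ZMod 2) = qF (reduce r) := by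
  intro r
  set a := r 0; set b := r 1; set c := r 2; set d := r 3; set e := r 4; set f := r 5
  refine ⟨-(a^2 + b^2 + c^2 + d^2 + e^2 + f^2) + (a*b + b*c + c*d + d*e + c*f), ?_, ?_⟩
  · rw [qE6_eq, Qp]; ring
  · have h1 : qF (reduce r) =
        (((a^2 + b^2 + c^2 + d^2 + e^2 + f^2) + (a*b + b*c + c*d + d*e + c*f) : ℤ) : ZMod 2) := by
      simp only [qF, reduce]
      push_cast
      ring
    rw [h1, ZMod.intCast_eq_intCast_iff, Int.modEq_iff_dvd]
    exact ⟨a^2 + b^2 + c^2 + d^2 + e^2 + f^2, by ring⟩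

lemma part4 : ∀ r : Fin 6 → ℤ, 2 * qE6 r = -4 → qF (reduce r) = 1 := by
  intro r h
  obtain ⟨m, h1, h2⟩ := part1 r
  have hm : m = -1 := by omega
  rw [← h2, hm]
  decide

def parB (t t' : T6) : Bool :=
  ((t.1 - t'.1) % 2 == 0) && ((t.2.1 - t'.2.1) % 2 == 0) && ((t.2.2.1 - t'.2.2.1) % 2 == 0) &&
  ((t.2.2.2.1 - t'.2.2.2.1) % 2 == 0) && ((t.2.2.2.2.1 - t'.2.2.2.2.1) % 2 == 0) &&
  ((t.2.2.2.2.2 - t'.2.2.2.2.2) % 2 == 0)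

set_option maxHeartbeats 4000000 in
set_option maxRecDepth 20000 in
lemma pairKey : ∀ t ∈ Tlist, ∀ t' ∈ Tlist, parB t t' = true → t = t' ∨ t = negT t' := by
  decide

lemma vec_negT (t : T6) : vec (negT t) = -vec t := by
  funext i; fin_cases i <;> rfl

lemma reduce_eq_parity (r r' : Fin 6 → ℤ) (h : reduce r = reduce r') (i : Fin 6) :
    (r i - r' i) % 2 = 0 := by
  have hi : ((r i : ℤ) : ZMod 2) = ((r' i : ℤ) : ZMod 2) := congrFun h i
  rw [ZMod.intCast_eq_intCast_iff, Int.modEq_iff_dvd] at hi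
  omega

lemma part5 : ∀ r r' : Fin 6 → ℤ, 2 * qE6 r = -4 → 2 * qE6 r' = -4 →
    (reduce r = reduce r' ↔ (r = r' ∨ r = -r')) := by
  intro r r' h h'
  constructor
  · intro hred
    obtain ⟨t, ht, rfl⟩ := (root_iff r).1 h
    obtain ⟨t', ht', rfl⟩ := (root_iff r').1 h'
    have hpar := fun i => reduce_eq_parity (vec t) (vec t') hred i
    have hp : parB t t' = true := by
      simp only [parB, Bool.and_eq_true, beq_iff_eq]
      exact ⟨⟨⟨⟨⟨hpar 0, hpar 1⟩, hpar 2⟩, hpar 3⟩, hpar 4⟩, hpar 5⟩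
    have := pairKey t ht t' ht' hp
    rcases this with h1 | h1
    · exact Or.inl (by rw [h1])
    · exact Or.inr (by rw [h1, vec_negT])
  · rintro (rfl | rfl)
    · rfl
    · funext i
      show (((-r') i : ℤ) : ZMod 2) = ((r' i : ℤ) : ZMod 2)
      rw [ZMod.intCast_eq_intCast_iff, Int.modEq_iff_dvd]
      exact ⟨r' i, by simp [Pi.neg_apply]; ring⟩

set_option maxHeartbeats 2000000 in
lemma surjKey : ∀ x : Fin 6 → ZMod 2, qF x = 1 → ∃ t ∈ Tlist, reduce (vec t) = x := by
  decide

lemma part6 : ∀ x : Fin 6 → ZMod 2, qF x = 1 →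
    ∃ r : Fin 6 → ℤ, 2 * qE6 r = -4 ∧ reduce r = x := by
  intro x hx
  obtain ⟨t, ht, h⟩ := surjKey x hx
  exact ⟨vec t, (root_iff (vec t)).2 ⟨t, ht, rfl⟩, h⟩

/-- The map sending a norm `−4` vector `r` of `E6(2)` to `(r/2) mod E6(2)` in
the 2-part of the discriminant group induces a bijection between the 36
`±`-pairs `{r, −r}` of the 72 norm `−4` vectors of `E6(2)` and the 36
non-isotropic vectors of the `F₂`-quadratic form `(q_{E6(2)})₂ ≅ u ⊕ u ⊕ v`. -/
theorem roots_biject_nonisotropic :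
    (∀ r : Fin 6 → ℤ, ∃ m : ℤ, qE6 r = 2 * m ∧ (m : ZMod 2) = qF (reduce r)) ∧
    {r : Fin 6 → ℤ | 2 * qE6 r = -4}.ncard = 72 ∧
    {x : Fin 6 → ZMod 2 | qF x = 1}.ncard = 36 ∧
    (∀ r : Fin 6 → ℤ, 2 * qE6 r = -4 → qF (reduce r) = 1) ∧
    (∀ r r' : Fin 6 → ℤ, 2 * qE6 r = -4 → 2 * qE6 r' = -4 →
      (reduce r = reduce r' ↔ (r = r' ∨ r = -r'))) ∧
    (∀ x : Fin 6 → ZMod 2, qF x = 1 → ∃ r : Fin 6 → ℤ, 2 * qE6 r = -4 ∧ reduce r = x) := by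
  refine ⟨part1, ?_, ?_, part4, part5, part6⟩
  · rw [setEq, Set.ncard_coe_finset, TFcard]
  · rw [show {x : Fin 6 → ZMod 2 | qF x = 1} =
        ↑(Finset.filter (fun x => qF x = 1) Finset.univ) by ext x; simp,
      Set.ncard_coe_finset, card36]
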